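/- Let $g : \mathbb{R} \to \mathbb{R}^m$ be continuously differentiable and $2\pi$-periodic, let $\tilde\beta \in \mathbb{R}$, and suppose $g(2\tilde\beta - \theta + \pi) = g(\theta)$ for all $\theta$ and $g'(\theta) \geq 0$ componentwise for $\theta \in [\tilde\beta - \pi/2, \tilde\beta + \pi/2]$. Then for every $\beta \in [\tilde\beta - \pi, \tilde\beta]$ and every $\theta \in (\beta - \pi/2, \beta + \pi/2)$ one has $g(\theta) \leq g(2\beta - \theta + \pi)$ componentwise. -/

import Mathlib

open Real

/-- Angular reduction of Proposition A: symmetry with respect to `T_β̃` and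
nonnegative angular derivative on the half-space imply domination by the
reflection through `T_β` for every `β ∈ [β̃ - π, β̃]`. -/
theorem stmt3 (m : ℕ) (g : ℝ → (Fin m → ℝ)) (βt : ℝ)
    (hg : ContDiff ℝ 1 g)
    (hper : ∀ θ, g (θ + 2 * π) = g θ)
    (hsym : ∀ θ, g (2 * βt - θ + π) = g θ)
    (hmono : ∀ θ ∈ Set.Icc (βt - π / 2) (βt + π / 2), ∀ i, 0 ≤ deriv g θ i) :
    ∀ β ∈ Set.Icc (βt - π) βt,
      ∀ θ ∈ Set.Ioo (β - π / 2) (β + π / 2), ∀ i, g θ i ≤ g (2 * β - θ + π) i := by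
  have hdiff : Differentiable ℝ g := hg.differentiable one_ne_zero
  -- derivative of each component
  have hfd : ∀ (i : Fin m) (x : ℝ), HasDerivAt (fun θ => g θ i) (deriv g x i) x := by
    intro i x
    have h := (ContinuousLinearMap.proj (R := ℝ) (φ := fun _ : Fin m => ℝ)
      i).hasFDerivAt.comp_hasDerivAt x (hdiff x).hasDerivAt
    exact h
  -- antisymmetry of the derivative
  have hderiv_sym : ∀ θ, deriv g θ = -(deriv g (2 * βt - θ + π)) := by
    intro θ
    have hinner : HasDerivAt (fun x : ℝ => 2 * βt - x + π) (-1) θ := by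
      simpa using ((hasDerivAt_id θ).const_sub (2 * βt)).add_const π
    have hcomp : HasDerivAt (fun x : ℝ => g (2 * βt - x + π))
        ((-1 : ℝ) • deriv g (2 * βt - θ + π)) θ :=
      (hdiff (2 * βt - θ + π)).hasDerivAt.scomp θ hinner
    have hfun : (fun x : ℝ => g (2 * βt - x + π)) = g := funext hsym
    rw [hfun] at hcomp
    have := hcomp.deriv
    simpa [neg_one_smul] using this
  set c := βt + π / 2 with hc
  -- symmetry about c
  have hsymc : ∀ s, g (c + s) = g (c - s) := by
    intro s
    have h := hsym (c - s)
    have h2 : 2 * βt - (c - s) + π = c + s := by rw [hc]; ring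
    rwa [h2] at h
  -- antitone on [c, c + π] componentwise
  have hA : ∀ i : Fin m, AntitoneOn (fun θ => g θ i) (Set.Icc c (c + π)) := by
    intro i
    apply antitoneOn_of_deriv_nonpos (convex_Icc _ _)
    · exact ((continuous_apply i).comp hg.continuous).continuousOn
    · intro x _
      exact (hfd i x).differentiableAt.differentiableWithinAt
    · intro x hx
      rw [interior_Icc] at hx
      obtain ⟨hx1, hx2⟩ := hx
      rw [(hfd i x).deriv]
      have hx1' : c < x := hx1
      have hmem : 2 * βt - x + π ∈ Set.Icc (βt - π / 2) (βt + π / 2) := by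
        constructor <;> [rw [hc] at hx2; rw [hc] at hx1'] <;> linarith
      have := hmono _ hmem i
      have heq : deriv g x i = -(deriv g (2 * βt - x + π) i) := by
        rw [hderiv_sym x]; simp
      rw [heq]; linarith
  have hkey : ∀ i : Fin m, ∀ s t : ℝ, 0 ≤ s → s ≤ t → t ≤ π →
      g (c + t) i ≤ g (c + s) i := by
    intro i s t hs hst htp
    exact hA i ⟨by linarith, by linarith⟩ ⟨by linarith, by linarith⟩ (by linarith)
  intro β hβ θ hθ i
  obtain ⟨hβ1, hβ2⟩ := hβ
  obtain ⟨hθ1, hθ2⟩ := hθ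
  -- reflected point
  have hT : g (2 * β - θ + π) = g (c + |2 * β - θ + π - c|) := by
    rcases le_or_gt 0 (2 * β - θ + π - c) with h | h
    · rw [abs_of_nonneg h]; congr 1; ring
    · rw [abs_of_neg h, hsymc]; congr 1; ring
  rcases le_or_gt (βt - π / 2) θ with hcase | hcase
  · -- θ ∈ [c - π, c]
    have hS : g θ = g (c + (c - θ)) := by
      rw [hsymc]; congr 1; ring
    have h1 : g (c + (c - θ)) i ≤ g (c + |2 * β - θ + π - c|) i := by
      apply hkey i
      · exact abs_nonneg _
      · exact abs_le.mpr ⟨by rw [hc]; linarith, by rw [hc]; linarith⟩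
      · rw [hc]; linarith
    rw [hS, hT]; exact h1
  · -- θ ∈ (c - 2π, c - π)
    have hS : g θ = g (c + (θ + 2 * π - c)) := by
      rw [← hper θ]; congr 1; ring
    have h1 : g (c + (θ + 2 * π - c)) i ≤ g (c + |2 * β - θ + π - c|) i := by
      apply hkey i
      · exact abs_nonneg _
      · exact abs_le.mpr ⟨by rw [hc]; linarith, by rw [hc]; linarith⟩
      · rw [hc]; linarith
    rw [hS, hT]; exact h1
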